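/- For any (t,x) ∈ ℕ × ∂B with t ≥ 1, the determinant of the square matrix W^+_{t,x} equals ∏_{(s,y)∈S(t,x)} P(Z^y_s = y + s e_d), the determinant of W^−_{t,x} equals ∏_{(s,y)∈S(t,x)} P(Z^y_s = y − s e_d), and both determinants are strictly positive; in particular the matrices W^±_{t,x} are invertible. -/

import Mathlib

open Finset

/-- The `i`-th standard unit vector `e_i` in `ℤ^(d+1)`. -/
def unitVec (d : ℕ) (i : Fin (d + 1)) : Fin (d + 1) → ℤ := Pi.single i 1

/-- The ℓ¹-norm `‖v‖₁ = ∑ i, |v i|` on `ℤ^(d+1)`. -/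
def norm1 {d : ℕ} (v : Fin (d + 1) → ℤ) : ℤ := ∑ i, |v i|

/-- `P t x z` represents the `t`-step transition probability `P(Z^x_t = z)` of a
time-homogeneous Markov chain on `ℤ^(d+1)` which at each step moves by `± e_i`,
with all `2(d+1)` one-step probabilities strictly positive and summing to `1`. -/
structure IsRandomWalk (d : ℕ)
    (P : ℕ → (Fin (d + 1) → ℤ) → (Fin (d + 1) → ℤ) → ℝ) : Prop where
  nonneg : ∀ t x z, 0 ≤ P t x z
  init : ∀ x z, P 0 x z = if z = x then 1 else 0
  step : ∀ t x z, P (t + 1) x z =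
      ∑ i, P 1 x (x + unitVec d i) * P t (x + unitVec d i) z
        + ∑ i, P 1 x (x - unitVec d i) * P t (x - unitVec d i) z
  sum_one : ∀ x, (∑ i, P 1 x (x + unitVec d i)) + (∑ i, P 1 x (x - unitVec d i)) = 1
  pos_add : ∀ x i, 0 < P 1 x (x + unitVec d i)
  pos_sub : ∀ x i, 0 < P 1 x (x - unitVec d i)

/-- The expectation `E[h(Z^x_t)]` (the law of `Z^x_t` has finite support). -/
noncomputable def expect {d : ℕ} (P : ℕ → (Fin (d + 1) → ℤ) → (Fin (d + 1) → ℤ) → ℝ)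
    (t : ℕ) (x : Fin (d + 1) → ℤ) (h : (Fin (d + 1) → ℤ) → ℝ) : ℝ :=
  ∑ᶠ z, h z * P t x z

/-- The finite set `S(t,x) = {(s,y) ∈ ℕ × ∂B : 1 ≤ s ≤ t, ‖y − x‖₁ ≤ t − s,
and t − s − ‖y − x‖₁ is even}`. -/
noncomputable def Sset (d t : ℕ) (x : Fin (d + 1) → ℤ) : Finset (ℕ × (Fin (d + 1) → ℤ)) :=
  ((Finset.Icc 1 t) ×ˢ (Fintype.piFinset fun i => Finset.Icc (x i - t) (x i + t))).filter
    (fun p => p.2 (Fin.last d) = 0 ∧ norm1 (p.2 - x) ≤ (t : ℤ) - p.1 ∧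
      Even ((t : ℤ) - p.1 - norm1 (p.2 - x)))

/-- The matrix `W^+_{t,x}`, with entries `(W^+)_{(s,y),(u,z)} = P(Z^y_s = z + u e_d)`. -/
noncomputable def Wplus {d : ℕ} (P : ℕ → (Fin (d + 1) → ℤ) → (Fin (d + 1) → ℤ) → ℝ)
    (t : ℕ) (x : Fin (d + 1) → ℤ) :
    Matrix {p // p ∈ Sset d t x} {p // p ∈ Sset d t x} ℝ :=
  fun p q => P p.1.1 p.1.2 (q.1.2 + Pi.single (Fin.last d) (q.1.1 : ℤ))

/-- The matrix `W^-_{t,x}`, with entries `(W^-)_{(s,y),(u,z)} = P(Z^y_s = z - u e_d)`. -/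
noncomputable def Wminus {d : ℕ} (P : ℕ → (Fin (d + 1) → ℤ) → (Fin (d + 1) → ℤ) → ℝ)
    (t : ℕ) (x : Fin (d + 1) → ℤ) :
    Matrix {p // p ∈ Sset d t x} {p // p ∈ Sset d t x} ℝ :=
  fun p q => P p.1.1 p.1.2 (q.1.2 - Pi.single (Fin.last d) (q.1.1 : ℤ))

/-- `N_{t,x} = (W^-_{t,x})⁻¹ W^+_{t,x}`. -/
noncomputable def Nmat {d : ℕ} (P : ℕ → (Fin (d + 1) → ℤ) → (Fin (d + 1) → ℤ) → ℝ)
    (t : ℕ) (x : Fin (d + 1) → ℤ) :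
    Matrix {p // p ∈ Sset d t x} {p // p ∈ Sset d t x} ℝ :=
  (Wminus P t x)⁻¹ * Wplus P t x

/-- The extended transform `N f`, vanishing outside `{w : w_d < 0}`, defined at a point
`w = x − t e_d` (with `x ∈ ∂B`, `t ≥ 1`) as the `(t,x)`-component of `N_{t,x}` applied to
the vector `(f(z + u e_d))_{(u,z) ∈ S(t,x)}`.  (Note that `(t,x) ∈ S(t,x)` always holds
in this situation, so the guard below is satisfied exactly when `w_d < 0`.) -/
noncomputable def Ntrans {d : ℕ} (P : ℕ → (Fin (d + 1) → ℤ) → (Fin (d + 1) → ℤ) → ℝ)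
    (f : (Fin (d + 1) → ℤ) → ℝ) : (Fin (d + 1) → ℤ) → ℝ := fun w =>
  if hm : ((-(w (Fin.last d))).toNat, Function.update w (Fin.last d) 0) ∈
      Sset d (-(w (Fin.last d))).toNat (Function.update w (Fin.last d) 0) then
    (Nmat P (-(w (Fin.last d))).toNat (Function.update w (Fin.last d) 0)).mulVec
      (fun p => f (p.1.2 + Pi.single (Fin.last d) (p.1.1 : ℤ)))
      ⟨((-(w (Fin.last d))).toNat, Function.update w (Fin.last d) 0), hm⟩
  else 0

lemma norm1_nonneg {d : ℕ} (v : Fin (d + 1) → ℤ) : 0 ≤ norm1 v :=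
  Finset.sum_nonneg fun i _ => abs_nonneg _

lemma norm1_eq_zero {d : ℕ} {v : Fin (d + 1) → ℤ} (h : norm1 v ≤ 0) : v = 0 := by
  have h0 : norm1 v = 0 := le_antisymm h (norm1_nonneg v)
  funext i
  have := (Finset.sum_eq_zero_iff_of_nonneg (fun i _ => abs_nonneg (v i))).mp h0 i (Finset.mem_univ i)
  simpa using this

lemma norm1_add_le {d : ℕ} (u v : Fin (d + 1) → ℤ) : norm1 (u + v) ≤ norm1 u + norm1 v := by
  unfold norm1
  rw [← Finset.sum_add_distrib]
  exact Finset.sum_le_sum fun i _ => abs_add_le _ _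

lemma norm1_neg {d : ℕ} (v : Fin (d + 1) → ℤ) : norm1 (-v) = norm1 v := by
  simp [norm1]

lemma norm1_unitVec {d : ℕ} (i : Fin (d + 1)) : norm1 (unitVec d i) = 1 := by
  unfold norm1 unitVec
  have : ∀ j, |(Pi.single i 1 : Fin (d+1) → ℤ) j| = (Pi.single i 1 : Fin (d+1) → ℤ) j := by
    intro j
    rcases eq_or_ne j i with h | h
    · subst h; simp
    · simp [Pi.single_eq_of_ne h]
  rw [Finset.sum_congr rfl fun j _ => this j, Finset.sum_pi_single']
  simp

lemma norm1_add_single {d : ℕ} (a : Fin (d + 1) → ℤ) (c : ℤ) (ha : a (Fin.last d) = 0) :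
    norm1 (a + Pi.single (Fin.last d) c) = norm1 a + |c| := by
  unfold norm1
  have key : ∀ i, |(a + Pi.single (Fin.last d) c : Fin (d+1) → ℤ) i| = |a i| + (Pi.single (Fin.last d) |c| : Fin (d+1) → ℤ) i := by
    intro i
    rcases eq_or_ne i (Fin.last d) with h | h
    · subst h; simp [ha]
    · simp [Pi.single_eq_of_ne h]
  rw [Finset.sum_congr rfl fun i _ => key i, Finset.sum_add_distrib, Finset.sum_pi_single']
  simp

lemma det_eq_prod_diag {n : Type*} [Fintype n] [DecidableEq n] (M : Matrix n n ℝ)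
    (w : n → ℕ) (h : ∀ p q, M p q ≠ 0 → p = q ∨ w q < w p) :
    M.det = ∏ i, M i i := by
  rw [Matrix.det_apply, Finset.sum_eq_single 1]
  · simp
  · intro σ _ hσ
    suffices h0 : ∃ i, M (σ i) i = 0 by
      obtain ⟨i, hi⟩ := h0
      have hz : (∏ j, M (σ j) j) = 0 := Finset.prod_eq_zero (Finset.mem_univ i) hi
      rw [hz, smul_zero]
    by_contra hc
    push_neg at hc
    have hle : ∀ i, w i ≤ w (σ i) := by
      intro i
      rcases h _ _ (hc i) with he | hlt
      · rw [he]
      · exact hlt.le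
    have hex : ∃ j, σ j ≠ j := by
      by_contra hall
      push_neg at hall
      exact hσ (Equiv.ext fun i => hall i)
    obtain ⟨j, hj⟩ := hex
    have hjs : w j < w (σ j) := by
      rcases h _ _ (hc j) with he | hlt
      · exact absurd he hj
      · exact hlt
    have h1 : ∑ i, w i < ∑ i, w (σ i) :=
      Finset.sum_lt_sum (fun i _ => hle i) ⟨j, Finset.mem_univ j, hjs⟩
    rw [Equiv.sum_comp σ w] at h1
    exact lt_irrefl _ h1
  · intro h1; exact absurd (Finset.mem_univ 1) h1

lemma walk_vanish {d : ℕ} {P : ℕ → (Fin (d + 1) → ℤ) → (Fin (d + 1) → ℤ) → ℝ}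
    (hP : IsRandomWalk d P) :
    ∀ (s : ℕ) (y w : Fin (d + 1) → ℤ), (s : ℤ) < norm1 (w - y) → P s y w = 0 := by
  intro s
  induction s with
  | zero =>
    intro y w h
    rw [hP.init, if_neg]
    intro he
    subst he
    simp [norm1] at h
  | succ s ih =>
    intro y w h
    have key : ∀ ε : Fin (d + 1) → ℤ, norm1 ε = 1 → P s (y + ε) w = 0 := by
      intro ε hε
      apply ih
      have h2 : norm1 (w - y) ≤ norm1 (w - (y + ε)) + 1 := by
        have he : w - y = (w - (y + ε)) + ε := by abel
        calc norm1 (w - y) = norm1 ((w - (y + ε)) + ε) := by rw [← he]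
          _ ≤ norm1 (w - (y + ε)) + norm1 ε := norm1_add_le _ _
          _ = norm1 (w - (y + ε)) + 1 := by rw [hε]
      push_cast at h ⊢
      linarith
    rw [hP.step, Finset.sum_eq_zero, Finset.sum_eq_zero, add_zero]
    · intro i _
      have h3 : P s (y + (-(unitVec d i))) w = 0 :=
        key _ (by rw [norm1_neg, norm1_unitVec])
      rw [← sub_eq_add_neg] at h3
      rw [h3, mul_zero]
    · intro i _
      rw [key _ (norm1_unitVec i), mul_zero]

lemma walk_pos_plus {d : ℕ} {P : ℕ → (Fin (d + 1) → ℤ) → (Fin (d + 1) → ℤ) → ℝ}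
    (hP : IsRandomWalk d P) :
    ∀ s (y : Fin (d + 1) → ℤ), 0 < P s y (y + Pi.single (Fin.last d) (s : ℤ)) := by
  intro s
  induction s with
  | zero => intro y; simp [hP.init]
  | succ s ih =>
    intro y
    rw [hP.step]
    have h1 : 0 < ∑ i, P 1 y (y + unitVec d i) *
        P s (y + unitVec d i) (y + Pi.single (Fin.last d) ((s + 1 : ℕ) : ℤ)) := by
      apply Finset.sum_pos'
      · intro i _; exact mul_nonneg (hP.nonneg _ _ _) (hP.nonneg _ _ _)
      · refine ⟨Fin.last d, Finset.mem_univ _, ?_⟩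
        have he : y + Pi.single (Fin.last d) ((s + 1 : ℕ) : ℤ) =
            (y + unitVec d (Fin.last d)) + Pi.single (Fin.last d) (s : ℤ) := by
          funext j
          rcases eq_or_ne j (Fin.last d) with hj | hj
          · subst hj
            simp [unitVec]
            push_cast
            ring
          · simp [unitVec, Pi.single_eq_of_ne hj]
        rw [he]
        exact mul_pos (hP.pos_add y (Fin.last d)) (ih (y + unitVec d (Fin.last d)))
    have h2 : 0 ≤ ∑ i, P 1 y (y - unitVec d i) *
        P s (y - unitVec d i) (y + Pi.single (Fin.last d) ((s + 1 : ℕ) : ℤ)) :=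
      Finset.sum_nonneg fun i _ => mul_nonneg (hP.nonneg _ _ _) (hP.nonneg _ _ _)
    linarith

lemma walk_pos_minus {d : ℕ} {P : ℕ → (Fin (d + 1) → ℤ) → (Fin (d + 1) → ℤ) → ℝ}
    (hP : IsRandomWalk d P) :
    ∀ s (y : Fin (d + 1) → ℤ), 0 < P s y (y - Pi.single (Fin.last d) (s : ℤ)) := by
  intro s
  induction s with
  | zero => intro y; simp [hP.init]
  | succ s ih =>
    intro y
    rw [hP.step]
    have h1 : 0 < ∑ i, P 1 y (y - unitVec d i) *
        P s (y - unitVec d i) (y - Pi.single (Fin.last d) ((s + 1 : ℕ) : ℤ)) := by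
      apply Finset.sum_pos'
      · intro i _; exact mul_nonneg (hP.nonneg _ _ _) (hP.nonneg _ _ _)
      · refine ⟨Fin.last d, Finset.mem_univ _, ?_⟩
        have he : y - Pi.single (Fin.last d) ((s + 1 : ℕ) : ℤ) =
            (y - unitVec d (Fin.last d)) - Pi.single (Fin.last d) (s : ℤ) := by
          funext j
          rcases eq_or_ne j (Fin.last d) with hj | hj
          · subst hj
            simp [unitVec]
            push_cast
            ring
          · simp [unitVec, Pi.single_eq_of_ne hj]
        rw [he]
        exact mul_pos (hP.pos_sub y (Fin.last d)) (ih (y - unitVec d (Fin.last d)))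
    have h2 : 0 ≤ ∑ i, P 1 y (y + unitVec d i) *
        P s (y + unitVec d i) (y - Pi.single (Fin.last d) ((s + 1 : ℕ) : ℤ)) :=
      Finset.sum_nonneg fun i _ => mul_nonneg (hP.nonneg _ _ _) (hP.nonneg _ _ _)
    linarith

lemma Sset_last_eq_zero {d t : ℕ} {x : Fin (d + 1) → ℤ} {p : ℕ × (Fin (d + 1) → ℤ)}
    (hp : p ∈ Sset d t x) : p.2 (Fin.last d) = 0 := by
  simp only [Sset, Finset.mem_filter] at hp
  exact hp.2.1

/-- `det W^±_{t,x} = ∏_{(s,y) ∈ S(t,x)} P(Z^y_s = y ± s e_d) > 0`;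
in particular `W^±_{t,x}` are invertible. -/
theorem stmt_6 (d : ℕ) (P : ℕ → (Fin (d + 1) → ℤ) → (Fin (d + 1) → ℤ) → ℝ)
    (hP : IsRandomWalk d P) (t : ℕ) (ht : 1 ≤ t)
    (x : Fin (d + 1) → ℤ) (hx : x (Fin.last d) = 0) :
    (Wplus P t x).det =
      (∏ p : {p // p ∈ Sset d t x},
        P p.1.1 p.1.2 (p.1.2 + Pi.single (Fin.last d) (p.1.1 : ℤ))) ∧
    (Wminus P t x).det =
      (∏ p : {p // p ∈ Sset d t x},
        P p.1.1 p.1.2 (p.1.2 - Pi.single (Fin.last d) (p.1.1 : ℤ))) ∧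
    0 < (Wplus P t x).det ∧ 0 < (Wminus P t x).det ∧
    IsUnit (Wplus P t x) ∧ IsUnit (Wminus P t x) := by
  have key : ∀ (p q : {p // p ∈ Sset d t x}) (c : ℤ), |c| = (q.1.1 : ℤ) →
      P p.1.1 p.1.2 (q.1.2 + Pi.single (Fin.last d) c) ≠ 0 → p = q ∨ q.1.1 < p.1.1 := by
    intro p q c hc hne
    have hy0 : p.1.2 (Fin.last d) = 0 := Sset_last_eq_zero p.2
    have hz0 : q.1.2 (Fin.last d) = 0 := Sset_last_eq_zero q.2
    have hb : norm1 (q.1.2 + Pi.single (Fin.last d) c - p.1.2) ≤ (p.1.1 : ℤ) := by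
      by_contra hlt
      push_neg at hlt
      exact hne (walk_vanish hP _ _ _ hlt)
    have hrw : q.1.2 + Pi.single (Fin.last d) c - p.1.2
        = (q.1.2 - p.1.2) + Pi.single (Fin.last d) c := by abel
    have hlast : (q.1.2 - p.1.2) (Fin.last d) = 0 := by
      simp [hz0, hy0]
    rw [hrw, norm1_add_single _ _ hlast, hc] at hb
    have hnn : 0 ≤ norm1 (q.1.2 - p.1.2) := norm1_nonneg _
    by_cases hus : q.1.1 < p.1.1
    · exact Or.inr hus
    · left
      push_neg at hus
      have hge : (p.1.1 : ℤ) ≤ (q.1.1 : ℤ) := by exact_mod_cast hus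
      have hn0 : norm1 (q.1.2 - p.1.2) ≤ 0 := by linarith
      have hzy : q.1.2 = p.1.2 := sub_eq_zero.mp (norm1_eq_zero hn0)
      have hsu : p.1.1 = q.1.1 := by
        have hle : (q.1.1 : ℤ) ≤ (p.1.1 : ℤ) := by linarith
        omega
      exact Subtype.ext (Prod.ext hsu hzy.symm)
  have hdetp : (Wplus P t x).det =
      ∏ p : {p // p ∈ Sset d t x},
        P p.1.1 p.1.2 (p.1.2 + Pi.single (Fin.last d) (p.1.1 : ℤ)) := by
    apply det_eq_prod_diag _ (fun p => p.1.1)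
    intro p q hne
    exact key p q (q.1.1 : ℤ) (abs_of_nonneg (Int.natCast_nonneg _)) hne
  have hdetm : (Wminus P t x).det =
      ∏ p : {p // p ∈ Sset d t x},
        P p.1.1 p.1.2 (p.1.2 - Pi.single (Fin.last d) (p.1.1 : ℤ)) := by
    apply det_eq_prod_diag _ (fun p => p.1.1)
    intro p q hne
    apply key p q (-(q.1.1 : ℤ)) (by simp)
    have hrw : q.1.2 + Pi.single (Fin.last d) (-(q.1.1 : ℤ))
        = q.1.2 - Pi.single (Fin.last d) (q.1.1 : ℤ) := by
      rw [Pi.single_neg, ← sub_eq_add_neg]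
    rw [hrw]
    exact hne
  have hposp : 0 < (Wplus P t x).det := by
    rw [hdetp]
    exact Finset.prod_pos fun p _ => walk_pos_plus hP _ _
  have hposm : 0 < (Wminus P t x).det := by
    rw [hdetm]
    exact Finset.prod_pos fun p _ => walk_pos_minus hP _ _
  exact ⟨hdetp, hdetm, hposp, hposm,
    (Matrix.isUnit_iff_isUnit_det _).mpr (isUnit_iff_ne_zero.mpr (ne_of_gt hposp)),
    (Matrix.isUnit_iff_isUnit_det _).mpr (isUnit_iff_ne_zero.mpr (ne_of_gt hposm))⟩
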